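/- Let K be a ℚ-algebra, r ≥ 1 an integer, A : ℕ → K a sequence with A_0 = 1, and B : {1,2,…} → K a sequence. Then A_d = Σ_{k=1}^{d} ((rd)!/k!) Σ_{a_1+…+a_k = d, a_i > 0} Π_{i=1}^{k} ( B_{a_i} / (r·a_i)! ) holds for all d ≥ 1 if and only if d·A_d = Σ_{e=1}^{d} e · B_e · A_{d−e} · C(rd, re) holds for all d ≥ 1. -/

import Mathlib

open Finset PowerSeries

section auxFNER

variable {K : Type*} [CommRing K] [Algebra ℚ K]

private lemma fner_sum_Icc_one {M : Type*} [AddCommMonoid M] (d : ℕ) (f : ℕ → M) :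
    ∑ e ∈ Icc 1 d, f e = ∑ q ∈ range d, f (q + 1) := by
  induction d with
  | zero => simp
  | succ n ih => rw [Finset.sum_range_succ, ← ih, Finset.sum_Icc_succ_top (by omega)]

private lemma fner_sum_tuple_succ {M : Type*} [AddCommMonoid M] (k d : ℕ)
    (f : (Fin (k + 1) → ℕ) → M) :
    ∑ c ∈ Finset.Nat.antidiagonalTuple (k + 1) d, f c
      = ∑ pq ∈ Finset.HasAntidiagonal.antidiagonal d, ∑ c ∈ Finset.Nat.antidiagonalTuple k pq.2,
          f (Fin.cons pq.1 c) := by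
  have hsig := Finset.sum_sigma' (Finset.HasAntidiagonal.antidiagonal d)
    (fun pq => Finset.Nat.antidiagonalTuple k pq.2)
    (fun pq c => f (Fin.cons pq.1 c))
  rw [hsig]
  refine Finset.sum_nbij' (i := fun c => ⟨(c 0, ∑ i, Fin.tail c i), Fin.tail c⟩)
    (j := fun x => Fin.cons x.1.1 x.2) ?_ ?_ ?_ ?_ ?_
  · intro c hc
    rw [Finset.Nat.mem_antidiagonalTuple] at hc
    refine Finset.mem_sigma.mpr ⟨?_, Finset.Nat.mem_antidiagonalTuple.mpr rfl⟩
    rw [Finset.HasAntidiagonal.mem_antidiagonal, ← hc, Fin.sum_univ_succ]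
    rfl
  · intro x hx
    rw [Finset.mem_sigma] at hx
    obtain ⟨h1, h2⟩ := hx
    rw [Finset.HasAntidiagonal.mem_antidiagonal] at h1
    rw [Finset.Nat.mem_antidiagonalTuple] at h2 ⊢
    rw [Fin.sum_univ_succ]
    simpa [h2] using h1
  · intro c _
    simp [Fin.cons_self_tail]
  · intro x hx
    rw [Finset.mem_sigma] at hx
    have h2 := Finset.Nat.mem_antidiagonalTuple.mp hx.2
    obtain ⟨⟨p, q⟩, c⟩ := x
    simp only [Fin.cons_zero, Fin.tail_cons]
    simp only at h2
    simp [h2]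
  · intro c _
    rw [Fin.cons_self_tail]

private lemma fner_coeff_mk_pow (b : ℕ → K) (k d : ℕ) :
    PowerSeries.coeff d ((PowerSeries.mk b) ^ k)
      = ∑ c ∈ Finset.Nat.antidiagonalTuple k d, ∏ i, b (c i) := by
  induction k generalizing d with
  | zero =>
    rcases d with _ | d
    · simp [Finset.Nat.antidiagonalTuple_zero_zero]
    · simp [Finset.Nat.antidiagonalTuple_zero_succ, PowerSeries.coeff_one]
  | succ k ih =>
    rw [pow_succ', PowerSeries.coeff_mul, fner_sum_tuple_succ]
    refine Finset.sum_congr rfl fun pq _ => ?_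
    rw [PowerSeries.coeff_mk, ih, Finset.mul_sum]
    refine Finset.sum_congr rfl fun c _ => ?_
    rw [Fin.prod_univ_succ]
    simp [Fin.cons_zero, Fin.cons_succ]

private lemma fner_coeff_pow_eq_zero (b : ℕ → K) (hb0 : b 0 = 0) {m k : ℕ} (h : m < k) :
    PowerSeries.coeff m ((PowerSeries.mk b) ^ k) = 0 := by
  have hX : (PowerSeries.X : K⟦X⟧) ∣ PowerSeries.mk b := by
    rw [PowerSeries.X_dvd_iff]
    simpa using hb0
  have hdvd : (PowerSeries.X : K⟦X⟧) ^ k ∣ (PowerSeries.mk b) ^ k := pow_dvd_pow_of_dvd hX k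
  exact (PowerSeries.X_pow_dvd_iff.mp hdvd) m h

private lemma fner_key (b : ℕ → K) (k d : ℕ) (hd : 1 ≤ d) :
    (d : K) * PowerSeries.coeff d ((PowerSeries.mk b) ^ (k + 1))
      = ((k : K) + 1) * ∑ e ∈ Icc 1 d,
          (e : K) * b e * PowerSeries.coeff (d - e) ((PowerSeries.mk b) ^ k) := by
  have hder : PowerSeries.derivative K ((PowerSeries.mk b) ^ (k + 1))
      = (k + 1) • (((PowerSeries.mk b) ^ k) • PowerSeries.derivative K (PowerSeries.mk b)) := by
    simpa using Derivation.leibniz_pow (PowerSeries.derivative K) (a := PowerSeries.mk b) (k + 1)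
  have hd1 : d - 1 + 1 = d := by omega
  have h1 : PowerSeries.coeff (d - 1)
        (PowerSeries.derivative K ((PowerSeries.mk b) ^ (k + 1)))
      = PowerSeries.coeff d ((PowerSeries.mk b) ^ (k + 1)) * d := by
    rw [PowerSeries.coeff_derivative, ← Nat.cast_succ, Nat.succ_eq_add_one, hd1]
  rw [hder] at h1
  have h2 : PowerSeries.coeff (d - 1)
        ((k + 1) • (((PowerSeries.mk b) ^ k) • PowerSeries.derivative K (PowerSeries.mk b)))
      = ((k : K) + 1) * ∑ pq ∈ Finset.HasAntidiagonal.antidiagonal (d - 1),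
          PowerSeries.coeff pq.1 ((PowerSeries.mk b) ^ k) *
            (PowerSeries.coeff (pq.2 + 1) (PowerSeries.mk b) * ((pq.2 : K) + 1)) := by
    rw [smul_eq_mul, map_nsmul, nsmul_eq_mul, PowerSeries.coeff_mul]
    push_cast
    congr 1
    refine Finset.sum_congr rfl fun pq _ => ?_
    rw [PowerSeries.coeff_derivative]
    try push_cast
    try ring
  rw [h2] at h1
  have h3 : ∑ pq ∈ Finset.HasAntidiagonal.antidiagonal (d - 1),
        PowerSeries.coeff pq.1 ((PowerSeries.mk b) ^ k) *
          (PowerSeries.coeff (pq.2 + 1) (PowerSeries.mk b) * ((pq.2 : K) + 1))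
      = ∑ e ∈ Icc 1 d, (e : K) * b e * PowerSeries.coeff (d - e) ((PowerSeries.mk b) ^ k) := by
    rw [fner_sum_Icc_one, ← Finset.Nat.sum_antidiagonal_swap,
      Finset.Nat.sum_antidiagonal_eq_sum_range_succ_mk]
    have hrange : (d - 1).succ = d := by omega
    rw [hrange]
    refine Finset.sum_congr rfl fun q hq => ?_
    rw [Finset.mem_range] at hq
    have hqq : d - 1 - q = d - (q + 1) := by omega
    simp only [Prod.swap_prod_mk, PowerSeries.coeff_mk, hqq]
    push_cast
    ring
  rw [h3] at h1
  rw [h1]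
  ring

private noncomputable def fnerE (b : ℕ → K) (d : ℕ) : K :=
  ∑ k ∈ range (d + 1),
    algebraMap ℚ K (1 / (Nat.factorial k : ℚ)) *
      PowerSeries.coeff d ((PowerSeries.mk b) ^ k)

private lemma fnerE_zero (b : ℕ → K) : fnerE b 0 = 1 := by
  simp [fnerE]

private lemma fnerE_eq_Icc (b : ℕ → K) (d : ℕ) (hd : 1 ≤ d) :
    fnerE b d = ∑ k ∈ Icc 1 d,
      algebraMap ℚ K (1 / (Nat.factorial k : ℚ)) *
        PowerSeries.coeff d ((PowerSeries.mk b) ^ k) := by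
  have hz : PowerSeries.coeff d ((PowerSeries.mk b) ^ 0) = 0 := by
    rw [pow_zero, PowerSeries.coeff_one, if_neg (by omega)]
  rw [fnerE, Finset.sum_range_succ', fner_sum_Icc_one, hz]
  simp

private lemma fner_core (b : ℕ → K) (hb0 : b 0 = 0) (d : ℕ) (hd : 1 ≤ d) :
    (d : K) * fnerE b d
      = ∑ e ∈ Icc 1 d, (e : K) * b e * fnerE b (d - e) := by
  set g : K⟦X⟧ := PowerSeries.mk b with hg
  rw [fnerE, Finset.mul_sum, Finset.sum_range_succ']
  have hz : PowerSeries.coeff d (g ^ 0) = 0 := by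
    rw [pow_zero, PowerSeries.coeff_one, if_neg (by omega)]
  rw [hz]
  simp only [mul_zero, add_zero]
  have step : ∀ j, (d : K) * (algebraMap ℚ K (1 / (Nat.factorial (j + 1) : ℚ)) *
        PowerSeries.coeff d (g ^ (j + 1)))
      = algebraMap ℚ K (1 / (Nat.factorial j : ℚ)) *
          ∑ e ∈ Icc 1 d, (e : K) * b e * PowerSeries.coeff (d - e) (g ^ j) := by
    intro j
    have hkey := fner_key b j d hd
    have hfac : algebraMap ℚ K (1 / (Nat.factorial (j + 1) : ℚ)) * ((j : K) + 1)
        = algebraMap ℚ K (1 / (Nat.factorial j : ℚ)) := by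
      have hcast : ((j : K) + 1) = algebraMap ℚ K ((j : ℚ) + 1) := by
        rw [map_add, map_natCast, map_one]
      rw [hcast, ← map_mul]
      congr 1
      have h1 : (Nat.factorial j : ℚ) ≠ 0 := by
        exact_mod_cast Nat.factorial_ne_zero j
      have h2 : ((j : ℚ) + 1) ≠ 0 := by positivity
      rw [Nat.factorial_succ]
      push_cast
      field_simp
      try ring
    calc (d : K) * (algebraMap ℚ K (1 / (Nat.factorial (j + 1) : ℚ)) *
            PowerSeries.coeff d (g ^ (j + 1)))
        = algebraMap ℚ K (1 / (Nat.factorial (j + 1) : ℚ)) *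
            ((d : K) * PowerSeries.coeff d (g ^ (j + 1))) := by ring
      _ = (algebraMap ℚ K (1 / (Nat.factorial (j + 1) : ℚ)) * ((j : K) + 1)) *
            ∑ e ∈ Icc 1 d, (e : K) * b e * PowerSeries.coeff (d - e) (g ^ j) := by
          rw [hkey]; ring
      _ = _ := by rw [hfac]
  calc ∑ j ∈ range d, (d : K) * (algebraMap ℚ K (1 / (Nat.factorial (j + 1) : ℚ)) *
          PowerSeries.coeff d (g ^ (j + 1)))
      = ∑ j ∈ range d, algebraMap ℚ K (1 / (Nat.factorial j : ℚ)) *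
          ∑ e ∈ Icc 1 d, (e : K) * b e * PowerSeries.coeff (d - e) (g ^ j) :=
        Finset.sum_congr rfl fun j _ => step j
    _ = ∑ e ∈ Icc 1 d, ∑ j ∈ range d, (e : K) * b e *
          (algebraMap ℚ K (1 / (Nat.factorial j : ℚ)) *
            PowerSeries.coeff (d - e) (g ^ j)) := by
        rw [Finset.sum_comm]
        refine Finset.sum_congr rfl fun e _ => ?_
        rw [Finset.mul_sum]
        exact Finset.sum_congr rfl fun j _ => by ring
    _ = ∑ e ∈ Icc 1 d, (e : K) * b e * fnerE b (d - e) := by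
        refine Finset.sum_congr rfl fun e he => ?_
        rw [Finset.mem_Icc] at he
        rw [← Finset.mul_sum]
        congr 1
        rw [fnerE]
        symm
        apply Finset.sum_subset
        · exact Finset.range_subset_range.mpr (by omega)
        · intro j hj hj'
          rw [Finset.mem_range] at hj hj'
          rw [fner_coeff_pow_eq_zero b hb0 (by omega)]
          simp

private lemma fner_cancel (q : ℚ) (hq : q ≠ 0) {x y : K}
    (h : algebraMap ℚ K q * x = algebraMap ℚ K q * y) : x = y := by
  have h2 := congrArg (fun z => algebraMap ℚ K q⁻¹ * z) h
  simpa [← mul_assoc, ← map_mul, inv_mul_cancel₀ hq] using h2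

end auxFNER

/-- Factorial-normalized exponential recursion lemma: for a commutative `ℚ`-algebra `K`,
`A : ℕ → K` with `A 0 = 1` and `B : ℕ → K`, the summation-form recursion
`A_d = Σ_{k=1}^d ((rd)!/k!) Σ_{a_1+…+a_k=d, a_i>0} Π_i B_{a_i}/(r·a_i)!` holds for all
`d ≥ 1` iff the convolution-form recursion `d·A_d = Σ_{e=1}^d e·B_e·A_{d−e}·C(rd,re)`
holds for all `d ≥ 1`. -/
theorem factorial_normalized_exp_recursion {K : Type*} [CommRing K] [Algebra ℚ K]
    (r : ℕ) (hr : 1 ≤ r) (A B : ℕ → K) (hA0 : A 0 = 1) :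
    (∀ d : ℕ, 1 ≤ d →
      A d = ∑ k ∈ Finset.Icc 1 d,
        algebraMap ℚ K ((Nat.factorial (r * d) : ℚ) / (Nat.factorial k : ℚ)) *
          ∑ c ∈ (Finset.Nat.antidiagonalTuple k d).filter (fun c => ∀ i, 0 < c i),
            ∏ i, B (c i) * algebraMap ℚ K (1 / (Nat.factorial (r * c i) : ℚ)))
    ↔ (∀ d : ℕ, 1 ≤ d →
      (d : K) * A d = ∑ e ∈ Finset.Icc 1 d,
        (e : K) * B e * A (d - e) * (Nat.choose (r * d) (r * e) : K)) := by
  classical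
  set u : ℚ →+* K := algebraMap ℚ K with hu
  set b : ℕ → K := fun e => if e = 0 then 0 else
    B e * u (1 / (Nat.factorial (r * e) : ℚ)) with hb
  have hb0 : b 0 = 0 := by simp [hb]
  set Ah : ℕ → K := fun d => A d * u (1 / (Nat.factorial (r * d) : ℚ)) with hAh
  have hAh0 : Ah 0 = 1 := by simp [hAh, hA0]
  have hfac_ne : ∀ n : ℕ, (Nat.factorial n : ℚ) ≠ 0 := fun n => by
    exact_mod_cast Nat.factorial_ne_zero n
  -- the filtered tuple sum equals the coefficient of (mk b)^k
  have hcoeff : ∀ k d : ℕ,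
      (∑ c ∈ (Finset.Nat.antidiagonalTuple k d).filter (fun c => ∀ i, 0 < c i),
          ∏ i, B (c i) * u (1 / (Nat.factorial (r * c i) : ℚ)))
        = PowerSeries.coeff d ((PowerSeries.mk b) ^ k) := by
    intro k d
    rw [fner_coeff_mk_pow]
    have h1 : (∑ c ∈ (Finset.Nat.antidiagonalTuple k d).filter (fun c => ∀ i, 0 < c i),
          ∏ i, B (c i) * u (1 / (Nat.factorial (r * c i) : ℚ)))
        = ∑ c ∈ (Finset.Nat.antidiagonalTuple k d).filter (fun c => ∀ i, 0 < c i),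
          ∏ i, b (c i) := by
      refine Finset.sum_congr rfl fun c hc => Finset.prod_congr rfl fun i _ => ?_
      rw [Finset.mem_filter] at hc
      rw [hb]
      simp only
      rw [if_neg (hc.2 i).ne']
    rw [h1]
    apply Finset.sum_subset (Finset.filter_subset _ _)
    intro c hct hcf
    rw [Finset.mem_filter, not_and] at hcf
    have := hcf hct
    push_neg at this
    obtain ⟨i, hi⟩ := this
    refine Finset.prod_eq_zero (Finset.mem_univ i) ?_
    have hci : c i = 0 := by omega
    simp [hb, hci]
  -- restatement of the summation form
  have hsum_iff : ∀ d : ℕ, 1 ≤ d →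
      ((A d = ∑ k ∈ Finset.Icc 1 d,
        u ((Nat.factorial (r * d) : ℚ) / (Nat.factorial k : ℚ)) *
          ∑ c ∈ (Finset.Nat.antidiagonalTuple k d).filter (fun c => ∀ i, 0 < c i),
            ∏ i, B (c i) * u (1 / (Nat.factorial (r * c i) : ℚ)))
        ↔ Ah d = fnerE b d) := by
    intro d hd
    have hS : (∑ k ∈ Finset.Icc 1 d,
        u ((Nat.factorial (r * d) : ℚ) / (Nat.factorial k : ℚ)) *
          ∑ c ∈ (Finset.Nat.antidiagonalTuple k d).filter (fun c => ∀ i, 0 < c i),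
            ∏ i, B (c i) * u (1 / (Nat.factorial (r * c i) : ℚ))) *
        u (1 / (Nat.factorial (r * d) : ℚ)) = fnerE b d := by
      rw [fnerE_eq_Icc b d hd, Finset.sum_mul]
      refine Finset.sum_congr rfl fun k _ => ?_
      rw [hcoeff k d]
      have hq : ((Nat.factorial (r * d) : ℚ) / (Nat.factorial k : ℚ)) *
          (1 / (Nat.factorial (r * d) : ℚ)) = 1 / (Nat.factorial k : ℚ) := by
        have h1 := hfac_ne (r * d)
        have h2 := hfac_ne k
        field_simp
        try ring
      rw [mul_assoc, mul_comm (PowerSeries.coeff d ((PowerSeries.mk b) ^ k))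
        (u (1 / (Nat.factorial (r * d) : ℚ))), ← mul_assoc, ← map_mul, hq]
    constructor
    · intro h
      rw [hAh]
      simp only
      rw [h, hS]
    · intro h
      apply fner_cancel (1 / (Nat.factorial (r * d) : ℚ))
        (by simp [hfac_ne (r * d)])
      rw [mul_comm (u _) (A d)]
      change Ah d = _
      rw [h, ← hS]
      ring
  -- per-term identity for the convolution form
  have hterm : ∀ d e : ℕ, 1 ≤ e → e ≤ d →
      ((e : K) * B e * A (d - e) * (Nat.choose (r * d) (r * e) : K)) *
          u (1 / (Nat.factorial (r * d) : ℚ))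
        = (e : K) * b e * Ah (d - e) := by
    intro d e he hed
    have hre : r * e ≤ r * d := Nat.mul_le_mul_left r hed
    have hrd : r * (d - e) = r * d - r * e := Nat.mul_sub r d e
    have hch : (Nat.choose (r * d) (r * e) : ℚ) * (1 / (Nat.factorial (r * d) : ℚ))
        = (1 / (Nat.factorial (r * e) : ℚ)) * (1 / (Nat.factorial (r * (d - e)) : ℚ)) := by
      have hfact := Nat.choose_mul_factorial_mul_factorial hre
      have : ((Nat.choose (r * d) (r * e) : ℚ)) * (Nat.factorial (r * e) : ℚ) *
          (Nat.factorial (r * d - r * e) : ℚ) = (Nat.factorial (r * d) : ℚ) := by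
        exact_mod_cast congrArg (Nat.cast : ℕ → ℚ) hfact
      rw [hrd]
      field_simp
      linarith [this]
    have hbe : b e = B e * u (1 / (Nat.factorial (r * e) : ℚ)) := by
      rw [hb]; simp only; rw [if_neg (by omega)]
    have hchK : (Nat.choose (r * d) (r * e) : K) * u (1 / (Nat.factorial (r * d) : ℚ))
        = u (1 / (Nat.factorial (r * e) : ℚ)) * u (1 / (Nat.factorial (r * (d - e)) : ℚ)) := by
      have : (Nat.choose (r * d) (r * e) : K) = u ((Nat.choose (r * d) (r * e) : ℚ)) := by
        rw [map_natCast]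
      rw [this, ← map_mul, ← map_mul, hch]
    calc ((e : K) * B e * A (d - e) * (Nat.choose (r * d) (r * e) : K)) *
          u (1 / (Nat.factorial (r * d) : ℚ))
        = (e : K) * B e * A (d - e) *
            ((Nat.choose (r * d) (r * e) : K) * u (1 / (Nat.factorial (r * d) : ℚ))) := by ring
      _ = (e : K) * B e * A (d - e) *
            (u (1 / (Nat.factorial (r * e) : ℚ)) *
              u (1 / (Nat.factorial (r * (d - e)) : ℚ))) := by rw [hchK]
      _ = (e : K) * (B e * u (1 / (Nat.factorial (r * e) : ℚ))) *
            (A (d - e) * u (1 / (Nat.factorial (r * (d - e)) : ℚ))) := by ring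
      _ = (e : K) * b e * Ah (d - e) := by rw [hbe]
  -- restatement of the convolution form
  have hconv_iff : ∀ d : ℕ, 1 ≤ d →
      (((d : K) * A d = ∑ e ∈ Finset.Icc 1 d,
          (e : K) * B e * A (d - e) * (Nat.choose (r * d) (r * e) : K))
        ↔ ((d : K) * Ah d = ∑ e ∈ Finset.Icc 1 d, (e : K) * b e * Ah (d - e))) := by
    intro d hd
    have hRHS : (∑ e ∈ Finset.Icc 1 d,
          (e : K) * B e * A (d - e) * (Nat.choose (r * d) (r * e) : K)) *
        u (1 / (Nat.factorial (r * d) : ℚ))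
        = ∑ e ∈ Finset.Icc 1 d, (e : K) * b e * Ah (d - e) := by
      rw [Finset.sum_mul]
      refine Finset.sum_congr rfl fun e he => ?_
      rw [Finset.mem_Icc] at he
      exact hterm d e he.1 he.2
    constructor
    · intro h
      have := congrArg (fun z => z * u (1 / (Nat.factorial (r * d) : ℚ))) h
      rw [hRHS] at this
      rw [← this, hAh]
      ring
    · intro h
      apply fner_cancel (1 / (Nat.factorial (r * d) : ℚ)) (by simp [hfac_ne (r * d)])
      rw [← hRHS] at h
      calc u (1 / (Nat.factorial (r * d) : ℚ)) * ((d : K) * A d)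
          = (d : K) * Ah d := by rw [hAh]; ring
        _ = (∑ e ∈ Finset.Icc 1 d,
              (e : K) * B e * A (d - e) * (Nat.choose (r * d) (r * e) : K)) *
            u (1 / (Nat.factorial (r * d) : ℚ)) := h
        _ = u (1 / (Nat.factorial (r * d) : ℚ)) * ∑ e ∈ Finset.Icc 1 d,
              (e : K) * B e * A (d - e) * (Nat.choose (r * d) (r * e) : K) := by ring
  constructor
  · intro hS d hd
    have hAhE : ∀ m : ℕ, Ah m = fnerE b m := by
      intro m
      rcases Nat.eq_zero_or_pos m with hm | hm
      · rw [hm, hAh0, fnerE_zero]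
      · exact (hsum_iff m hm).mp (hS m hm)
    apply (hconv_iff d hd).mpr
    calc (d : K) * Ah d = (d : K) * fnerE b d := by rw [hAhE d]
      _ = ∑ e ∈ Finset.Icc 1 d, (e : K) * b e * fnerE b (d - e) := fner_core b hb0 d hd
      _ = ∑ e ∈ Finset.Icc 1 d, (e : K) * b e * Ah (d - e) :=
          Finset.sum_congr rfl fun e _ => by rw [hAhE (d - e)]
  · intro hC
    have hAhE : ∀ m : ℕ, Ah m = fnerE b m := by
      intro m
      induction m using Nat.strong_induction_on with
      | _ m ih =>
        rcases Nat.eq_zero_or_pos m with hm | hm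
        · rw [hm, hAh0, fnerE_zero]
        · have h1 := (hconv_iff m hm).mp (hC m hm)
          have h2 := fner_core b hb0 m hm
          have h3 : (m : K) * Ah m = (m : K) * fnerE b m := by
            rw [h1, h2]
            refine Finset.sum_congr rfl fun e he => ?_
            rw [Finset.mem_Icc] at he
            rw [ih (m - e) (by omega)]
          have h4 : u (m : ℚ) * Ah m = u (m : ℚ) * fnerE b m := by
            rwa [map_natCast] 
          have hm0 : (m : ℚ) ≠ 0 := Nat.cast_ne_zero.mpr (by omega)
          exact fner_cancel (m : ℚ) hm0 h4
    intro d hd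
    exact (hsum_iff d hd).mpr (hAhE d)
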